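/- Let ψ : ℝ → ℝ be defined by ψ(x) = 3x if x < 1/2 and ψ(x) = 3x − 2 if x ≥ 1/2. Then the set of points all of whose forward ψ-iterates remain in [0,1], namely ⋂_{n ∈ ℕ} (ψ^n)⁻¹([0,1]) (where ψ^n denotes the n-fold iterate of ψ), equals the middle-thirds Cantor set, i.e., the set of real numbers of the form ∑_{n=0}^{∞} a_n / 3^{n+1} where each digit a_n ∈ {0, 2}. -/

import Mathlib

open Set Filter

private lemma cantor_summable {a : ℕ → ℝ} (ha : ∀ n, a n = 0 ∨ a n = 2) :
    Summable (fun n => a n / 3 ^ (n + 1)) := by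
  apply Summable.of_nonneg_of_le (f := fun n => (2 : ℝ) / 3 ^ (n + 1))
  · intro n
    have h2 : 0 ≤ a n := by rcases ha n with h | h <;> rw [h] <;> norm_num
    positivity
  · intro n
    have h2 : a n ≤ 2 := by rcases ha n with h | h <;> rw [h] <;> norm_num
    gcongr
  · have h : ∀ n : ℕ, (2 : ℝ) / 3 ^ (n + 1) = (2 / 3) * (1 / 3) ^ n := by
      intro n; rw [pow_succ, one_div_pow, div_mul_div_comm, mul_one, mul_comm (3:ℝ) (3^n)]
    have hs : Summable (fun n : ℕ => ((1 : ℝ) / 3) ^ n) :=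
      summable_geometric_of_lt_one (by norm_num) (by norm_num)
    exact ((hs.mul_left (2 / 3)).congr fun n => (h n).symm)

private lemma cantor_tsum_bound {a : ℕ → ℝ} (ha : ∀ n, a n = 0 ∨ a n = 2) :
    (∑' n : ℕ, a n / 3 ^ (n + 1)) ∈ Icc (0 : ℝ) 1 := by
  constructor
  · apply tsum_nonneg
    intro n
    have h2 : 0 ≤ a n := by rcases ha n with h | h <;> rw [h] <;> norm_num
    positivity
  · have h1 : ∑' n : ℕ, (2 : ℝ) / 3 ^ (n + 1) = 1 := by
      have h : ∀ n : ℕ, (2 : ℝ) / 3 ^ (n + 1) = (2 / 3) * (1 / 3) ^ n := by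
        intro n; rw [pow_succ, one_div_pow, div_mul_div_comm, mul_one, mul_comm (3:ℝ) (3^n)]
      rw [tsum_congr h, tsum_mul_left,
        tsum_geometric_of_lt_one (by norm_num) (by norm_num)]
      norm_num
    have hle : (∑' n : ℕ, a n / 3 ^ (n + 1)) ≤ ∑' n : ℕ, (2 : ℝ) / 3 ^ (n + 1) := by
      apply Summable.tsum_le_tsum _ (cantor_summable ha) (cantor_summable (fun _ => Or.inr rfl))
      intro n
      have h2 : a n ≤ 2 := by rcases ha n with h | h <;> rw [h] <;> norm_num
      gcongr
    linarith

private lemma cantor_shift {ψ : ℝ → ℝ}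
    (hψ : ∀ x : ℝ, ψ x = if x < 1 / 2 then 3 * x else 3 * x - 2)
    {a : ℕ → ℝ} (ha : ∀ n, a n = 0 ∨ a n = 2) :
    ψ (∑' n : ℕ, a n / 3 ^ (n + 1)) = ∑' n : ℕ, a (n + 1) / 3 ^ (n + 1) := by
  set x := ∑' n : ℕ, a n / 3 ^ (n + 1) with hxd
  set y := ∑' n : ℕ, a (n + 1) / 3 ^ (n + 1) with hy
  have ha' : ∀ n, a (n + 1) = 0 ∨ a (n + 1) = 2 := fun n => ha (n + 1)
  have hyb := cantor_tsum_bound ha'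
  rw [← hy] at hyb
  have hsplit : x = a 0 / 3 + y / 3 := by
    have h0 := Summable.tsum_eq_zero_add (cantor_summable ha)
    have h1 : ∑' n : ℕ, a (n + 1) / 3 ^ (n + 1 + 1) = y / 3 := by
      have h2 : ∀ n : ℕ, a (n + 1) / 3 ^ (n + 1 + 1) = (1 / 3) * (a (n + 1) / 3 ^ (n + 1)) := by
        intro n; rw [pow_succ]; ring
      rw [tsum_congr h2, tsum_mul_left, ← hy]; ring
    rw [hxd, h0, h1]; norm_num
  rcases ha 0 with h0 | h0
  · have hx : x = y / 3 := by rw [hsplit, h0]; ring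
    have hlt : x < 1 / 2 := by rw [hx]; linarith [hyb.2]
    rw [hψ, if_pos hlt, hx]; ring
  · have hx : x = 2 / 3 + y / 3 := by rw [hsplit, h0]
    have hlt : ¬ x < 1 / 2 := by rw [hx]; push_neg; linarith [hyb.1]
    rw [hψ, if_neg hlt, hx]; ring

/-- The set of points all of whose forward iterates under the expanding map
`ψ(x) = 3x` (for `x < 1/2`), `ψ(x) = 3x - 2` (for `x ≥ 1/2`) remain in `[0,1]`
is exactly the middle-thirds Cantor set, i.e. the set of sums
`∑ aₙ / 3^(n+1)` with all digits `aₙ ∈ {0, 2}`. -/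
theorem ternary_cantor_set_eq_maximal_invariant (ψ : ℝ → ℝ)
    (hψ : ∀ x : ℝ, ψ x = if x < 1 / 2 then 3 * x else 3 * x - 2) :
    (⋂ n : ℕ, ψ^[n] ⁻¹' Icc (0 : ℝ) 1) =
      {x : ℝ | ∃ a : ℕ → ℝ, (∀ n, a n = 0 ∨ a n = 2) ∧
        x = ∑' n : ℕ, a n / 3 ^ (n + 1)} := by
  ext x
  simp only [mem_iInter, mem_preimage, mem_setOf_eq]
  constructor
  · intro hx
    set a : ℕ → ℝ := fun n => if ψ^[n] x < 1 / 2 then 0 else 2 with haDef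
    have ha : ∀ n, a n = 0 ∨ a n = 2 := by
      intro n
      by_cases h : ψ^[n] x < 1 / 2
      · left; simp only [haDef]; rw [if_pos h]
      · right; simp only [haDef]; rw [if_neg h]
    refine ⟨a, ha, ?_⟩
    have key : ∀ n : ℕ, x = (∑ k ∈ Finset.range n, a k / 3 ^ (k + 1)) + ψ^[n] x / 3 ^ n := by
      intro n
      induction n with
      | zero => simp
      | succ n ih =>
        have hstep : ψ^[n + 1] x = 3 * ψ^[n] x - a n := by
          rw [Function.iterate_succ_apply', hψ]
          simp only [haDef]
          split_ifs with h <;> ring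
        rw [Finset.sum_range_succ, hstep]
        conv_lhs => rw [ih]
        have h3 : (3 : ℝ) ^ n ≠ 0 := by positivity
        have h4 : (3 : ℝ) ^ (n + 1) = 3 ^ n * 3 := pow_succ 3 n
        rw [h4]
        field_simp
        ring
    have hsum := cantor_summable ha
    have htend1 : Tendsto (fun n => ∑ k ∈ Finset.range n, a k / 3 ^ (k + 1)) atTop
        (nhds (∑' n : ℕ, a n / 3 ^ (n + 1))) := hsum.hasSum.tendsto_sum_nat
    have htend2 : Tendsto (fun n => ∑ k ∈ Finset.range n, a k / 3 ^ (k + 1)) atTop (nhds x) := by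
      have heq : (fun n => ∑ k ∈ Finset.range n, a k / 3 ^ (k + 1))
          = fun n => x - ψ^[n] x / 3 ^ n := by
        funext n; have := key n; linarith
      rw [heq]
      have hz : Tendsto (fun n : ℕ => ψ^[n] x / 3 ^ n) atTop (nhds 0) := by
        have hb : Tendsto (fun n : ℕ => ((1 : ℝ) / 3) ^ n) atTop (nhds 0) :=
          tendsto_pow_atTop_nhds_zero_of_lt_one (by norm_num) (by norm_num)
        refine squeeze_zero (fun n => ?_) (fun n => ?_) hb
        · have h := (hx n).1
          positivity
        · have h := (hx n).2
          calc ψ^[n] x / 3 ^ n ≤ 1 / 3 ^ n := by gcongr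
            _ = ((1 : ℝ) / 3) ^ n := by rw [one_div_pow]
      have : Tendsto (fun n : ℕ => x - ψ^[n] x / 3 ^ n) atTop (nhds (x - 0)) :=
        tendsto_const_nhds.sub hz
      simpa using this
    exact tendsto_nhds_unique htend2 htend1
  · rintro ⟨a, ha, rfl⟩
    intro n
    have key : ∀ m : ℕ, ψ^[m] (∑' n : ℕ, a n / 3 ^ (n + 1))
        = ∑' k : ℕ, a (k + m) / 3 ^ (k + 1) := by
      intro m
      induction m with
      | zero => simp
      | succ m ih =>
        rw [Function.iterate_succ_apply', ih,
          cantor_shift hψ (fun k => ha (k + m))]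
        congr 1
        funext k
        congr 2
        omega
    rw [key n]
    exact cantor_tsum_bound (fun k => ha (k + n))
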